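/- Let z₀ ∈ ℂ, r > 0, and let λ₁,…,λ_M be pairwise distinct points in the open disc B(z₀,r). Let h : ℂ → ℂ be holomorphic on an open set containing the closed disc \bar{B}(z₀,r), and define g(z) = h(z)/∏_{j=1}^M (z−λ_j). Let 1 ≤ n ≤ M and let f : ℂⁿ → ℂ be holomorphic in each variable on an open set containing \bar{B}(z₀,r)ⁿ, symmetric under all permutations of its n arguments, and such that f(ω₁,…,ω_n) = 0 whenever ω_i = ω_j for some i ≠ j. Then the iterated contour integral over the circle C = {|z−z₀| = r}, traversed once counterclockwise, satisfies (1/n!) ∮_C ··· ∮_C f(ω₁,…,ω_n) ∏_{j=1}^n g(ω_j) dω₁/(2πi) ··· dω_n/(2πi) = Σ_{S ⊆ {1,…,M}, |S| = n} f((λ_j)_{j∈S}) ∏_{j∈S} [ h(λ_j) / ∏_{k=1,k≠j}^M (λ_j − λ_k) ], where (λ_j)_{j∈S} denotes the n-tuple of points λ_j with j ∈ S (in any order, which is immaterial by symmetry of f). -/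

import Mathlib

open Complex

/-- The iterated contour integral `∮_C ⋯ ∮_C F(ω₁,…,ω_n) dω₁ ⋯ dω_n` over the
positively oriented circle `C = {|z − c| = r}`. -/
noncomputable def iterCircleIntegral (c : ℂ) (r : ℝ) :
    (n : ℕ) → ((Fin n → ℂ) → ℂ) → ℂ
  | 0, F => F (fun i => i.elim0)
  | n + 1, F => ∮ z in C(c, r), iterCircleIntegral c r n (fun ω => F (Fin.cons z ω))

open Finset Metric in
lemma partialFractions {M : ℕ} (hM : 0 < M) (lam : Fin M → ℂ)
    (hinj : Function.Injective lam) (z : ℂ) (hz : ∀ k, z ≠ lam k) :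
    (∏ k, (z - lam k))⁻¹
      = ∑ j, (z - lam j)⁻¹ * (∏ k ∈ Finset.univ.erase j, (lam j - lam k))⁻¹ := by
  have hP : (∏ k, (z - lam k)) ≠ 0 :=
    Finset.prod_ne_zero_iff.2 fun k _ => sub_ne_zero.2 (hz k)
  have hone : (1 : ℂ) = ∑ j, Polynomial.eval z (Lagrange.basis Finset.univ lam j) := by
    rw [← Polynomial.eval_finset_sum]
    rw [Lagrange.sum_basis (hinj.injOn) ⟨⟨0, hM⟩, Finset.mem_univ _⟩]
    simp
  have heval : ∀ j : Fin M, Polynomial.eval z (Lagrange.basis Finset.univ lam j)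
      = (∏ k ∈ Finset.univ.erase j, (lam j - lam k)⁻¹) *
        ((∏ k, (z - lam k)) * (z - lam j)⁻¹) := by
    intro j
    rw [Lagrange.basis, Polynomial.eval_prod]
    have : ∀ k ∈ Finset.univ.erase j,
        Polynomial.eval z (Lagrange.basisDivisor (lam j) (lam k))
          = (lam j - lam k)⁻¹ * (z - lam k) := by
      intro k _; simp [Lagrange.basisDivisor]
    rw [Finset.prod_congr rfl this, Finset.prod_mul_distrib]
    congr 1
    have hmul : (∏ k ∈ Finset.univ.erase j, (z - lam k)) * (z - lam j)
        = ∏ k, (z - lam k) := Finset.prod_erase_mul _ _ (Finset.mem_univ j)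
    field_simp [sub_ne_zero.2 (hz j), ← hmul]
    exact hmul
  calc (∏ k, (z - lam k))⁻¹ = (∏ k, (z - lam k))⁻¹ * 1 := by ring
    _ = ∑ j, (∏ k, (z - lam k))⁻¹ * Polynomial.eval z (Lagrange.basis Finset.univ lam j) := by
        rw [hone, Finset.mul_sum]
    _ = _ := by
        refine Finset.sum_congr rfl fun j _ => ?_
        rw [heval j]
        rw [Finset.prod_inv_distrib, mul_left_comm _ (∏ k ∈ Finset.univ.erase j, (lam j - lam k))⁻¹, inv_mul_cancel_left₀ hP]
        exact mul_comm _ _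

open Finset Metric in
lemma circleIntegral_finset_sum {ι : Type*} (s : Finset ι) (f : ι → ℂ → ℂ) (c : ℂ) (R : ℝ)
    (h : ∀ i ∈ s, CircleIntegrable (f i) c R) :
    (∮ z in C(c, R), ∑ i ∈ s, f i z) = ∑ i ∈ s, ∮ z in C(c, R), f i z := by
  simp only [circleIntegral, Finset.smul_sum]
  exact intervalIntegral.integral_finset_sum (fun i hi => (h i hi).out)

lemma singleResidue (z₀ : ℂ) (r : ℝ) (hr : 0 < r) {M : ℕ} (hM : 0 < M)
    (lam : Fin M → ℂ) (hinj : Function.Injective lam)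
    (hmem : ∀ j, lam j ∈ Metric.ball z₀ r)
    (H : ℂ → ℂ) (W : Set ℂ) (hW : IsOpen W) (hWb : Metric.closedBall z₀ r ⊆ W)
    (hH : DifferentiableOn ℂ H W) :
    (∮ z in C(z₀, r), H z / ∏ k, (z - lam k))
      = (2 * ↑Real.pi * I) * ∑ j, H (lam j) / ∏ k ∈ Finset.univ.erase j, (lam j - lam k) := by
  have hball : Metric.ball z₀ r ⊆ W := (Metric.ball_subset_closedBall).trans hWb
  have hsph : Metric.sphere z₀ r ⊆ W := (Metric.sphere_subset_closedBall).trans hWb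
  have hzne : ∀ z ∈ Metric.sphere z₀ r, ∀ k, z ≠ lam k := by
    intro z hzs k he
    have := hmem k
    rw [← he] at this
    exact absurd (Metric.mem_sphere.mp hzs) (by rw [Metric.mem_ball] at this; linarith)
  -- rewrite integrand via partial fractions on the sphere
  have hcong : Set.EqOn (fun z => H z / ∏ k, (z - lam k))
      (fun z => ∑ j, (z - lam j)⁻¹ •
        (H z * (∏ k ∈ Finset.univ.erase j, (lam j - lam k))⁻¹)) (Metric.sphere z₀ r) := by
    intro z hzs
    simp only [div_eq_mul_inv, smul_eq_mul,
      partialFractions hM lam hinj z (hzne z hzs), Finset.mul_sum]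
    exact Finset.sum_congr rfl fun j _ => by ring
  rw [circleIntegral.integral_congr hr.le hcong]
  have hint : ∀ j : Fin M, CircleIntegrable (fun z => (z - lam j)⁻¹ •
      (H z * (∏ k ∈ Finset.univ.erase j, (lam j - lam k))⁻¹)) z₀ r := by
    intro j
    refine ContinuousOn.circleIntegrable hr.le ?_
    refine ContinuousOn.smul (?_ : ContinuousOn (fun z : ℂ => (z - lam j)⁻¹) (Metric.sphere z₀ r)) (((hH.continuousOn.mono hsph).mul continuousOn_const))
    refine ContinuousOn.inv₀ ((continuousOn_id.sub continuousOn_const)) ?_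
    exact fun z hz => sub_ne_zero.2 (hzne z hz j)
  rw [circleIntegral_finset_sum _ _ _ _ (fun j _ => hint j), Finset.mul_sum]
  refine Finset.sum_congr rfl fun j _ => ?_
  have hd : DiffContOnCl ℂ (fun z => H z * (∏ k ∈ Finset.univ.erase j, (lam j - lam k))⁻¹)
      (Metric.ball z₀ r) := by
    refine DifferentiableOn.diffContOnCl ?_
    rw [closure_ball z₀ hr.ne']
    exact (hH.mono hWb).mul (differentiableOn_const _)
  rw [DiffContOnCl.circleIntegral_sub_inv_smul hd (hmem j)]
  simp only [smul_eq_mul, div_eq_mul_inv]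

open Finset Metric in
lemma lemA (z₀ : ℂ) (r : ℝ) (hr : 0 < r) {M : ℕ} (hM : 0 < M)
    (lam : Fin M → ℂ) (hinj : Function.Injective lam)
    (hmem : ∀ j, lam j ∈ Metric.ball z₀ r)
    (h : ℂ → ℂ) (U : Set ℂ) (hU : IsOpen U) (hUb : Metric.closedBall z₀ r ⊆ U)
    (hh : DifferentiableOn ℂ h U)
    (V : Set ℂ) (hV : IsOpen V) (hVb : Metric.closedBall z₀ r ⊆ V) :
    ∀ (n : ℕ) (f : (Fin n → ℂ) → ℂ),
      (∀ (i : Fin n) (ω : Fin n → ℂ), (∀ j, ω j ∈ V) →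
        DifferentiableAt ℂ (fun z => f (Function.update ω i z)) (ω i)) →
      iterCircleIntegral z₀ r n (fun ω => f ω * ∏ j, (h (ω j) / ∏ k, (ω j - lam k)))
        = (2 * ↑Real.pi * I) ^ n * ∑ t : Fin n → Fin M, f (lam ∘ t) *
            ∏ j, (h (lam (t j)) / ∏ k ∈ Finset.univ.erase (t j), (lam (t j) - lam k)) := by
  intro n
  induction n with
  | zero =>
      intro f _
      simp only [iterCircleIntegral, Finset.univ_eq_empty, Finset.prod_empty, mul_one, pow_zero,
        one_mul]
      rw [Fintype.sum_unique]
      congr 1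
      exact Subsingleton.elim _ _
  | succ n ih =>
      intro f hf
      set g : ℂ → ℂ := fun z => h z / ∏ k, (z - lam k) with hg
      set Res : Fin M → ℂ :=
        fun j => h (lam j) / ∏ k ∈ Finset.univ.erase j, (lam j - lam k) with hRes
      have hsphV : Metric.sphere z₀ r ⊆ V := Metric.sphere_subset_closedBall.trans hVb
      have hballV : Metric.ball z₀ r ⊆ V := Metric.ball_subset_closedBall.trans hVb
      have hzne : ∀ z ∈ Metric.sphere z₀ r, ∀ k, z ≠ lam k := by
        intro z hzs k he
        have := hmem k
        rw [← he, Metric.mem_ball] at this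
        rw [Metric.mem_sphere] at hzs
        linarith
      -- continuity of z ↦ f (cons z ω) for fixed ω ∈ V^n
      have hfz : ∀ (ω : Fin n → ℂ), (∀ j, ω j ∈ V) → ∀ z ∈ V,
          DifferentiableAt ℂ (fun w => f (Fin.cons w ω)) z := by
        intro ω hω z hz
        have := hf 0 (Fin.cons z ω) (fun j => Fin.cases hz hω j)
        simpa only [Fin.cons_zero, Fin.update_cons_zero] using this
      -- Step 1: evaluate inner integral for z on the sphere
      have key : ∀ z ∈ Metric.sphere z₀ r,
          iterCircleIntegral z₀ r n
              (fun ω : Fin n → ℂ => f (Fin.cons z ω) * ∏ j : Fin (n+1), g (Fin.cons (α := fun _ => ℂ) z ω j))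
            = (2 * ↑Real.pi * I) ^ n *
                ∑ t : Fin n → Fin M,
                  (f (Fin.cons z (lam ∘ t)) * g z) * ∏ j, Res (t j) := by
        intro z hz
        have hzV : z ∈ V := hsphV hz
        have h1 : (fun ω : Fin n → ℂ => f (Fin.cons z ω) * ∏ j : Fin (n+1), g (Fin.cons (α := fun _ => ℂ) z ω j))
            = fun ω => (f (Fin.cons z ω) * g z) * ∏ j : Fin n, g (ω j) := by
          funext ω
          rw [Fin.prod_univ_succ]
          simp only [Fin.cons_zero, Fin.cons_succ]
          ring
        rw [h1]
        refine ih (fun ω => f (Fin.cons z ω) * g z) ?_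
        intro i ω hω
        have heq : (fun w => f (Fin.cons z (Function.update ω i w)) * g z)
            = fun w => f (Function.update (Fin.cons z ω) i.succ w) * g z := by
          funext w
          rw [Fin.cons_update]
        rw [heq]
        have := (hf i.succ (Fin.cons z ω) (fun j => Fin.cases hzV hω j)).mul_const (g z)
        simpa only [Fin.cons_succ] using this
      -- Step 2-3: rewrite the outer integral
      rw [iterCircleIntegral]
      rw [circleIntegral.integral_congr hr.le (fun z hz => key z hz)]
      rw [circleIntegral.integral_const_mul]
      -- Step 4: swap sum and integral
      have hcontf : ∀ (t : Fin n → Fin M),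
          ContinuousOn (fun z => (f (Fin.cons z (lam ∘ t)) * g z) * ∏ j, Res (t j))
            (Metric.sphere z₀ r) := by
        intro t
        have hlamV : ∀ j, (lam ∘ t) j ∈ V := fun j => hballV (hmem (t j))
        refine ContinuousOn.mul (ContinuousOn.mul ?_ ?_) continuousOn_const
        · intro z hz
          exact ((hfz (lam ∘ t) hlamV z (hsphV hz)).continuousAt).continuousWithinAt
        · refine ContinuousOn.div ((hh.continuousOn).mono
            (Metric.sphere_subset_closedBall.trans hUb)) ?_ ?_
          · exact continuousOn_finset_prod _ fun k _ =>
              (continuousOn_id.sub continuousOn_const)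
          · exact fun z hz => Finset.prod_ne_zero_iff.2
              fun k _ => sub_ne_zero.2 (hzne z hz k)
      rw [circleIntegral_finset_sum _ _ _ _
        (fun t _ => ContinuousOn.circleIntegrable hr.le (hcontf t))]
      -- Step 5: evaluate each integral by the single residue lemma
      have step5 : ∀ t : Fin n → Fin M,
          (∮ z in C(z₀, r), (f (Fin.cons z (lam ∘ t)) * g z) * ∏ j, Res (t j))
            = (∏ j, Res (t j)) * ((2 * ↑Real.pi * I) *
                ∑ j, (f (Fin.cons (lam j) (lam ∘ t)) * h (lam j)) /
                  ∏ k ∈ Finset.univ.erase j, (lam j - lam k)) := by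
        intro t
        have hlamV : ∀ j, (lam ∘ t) j ∈ V := fun j => hballV (hmem (t j))
        have h2 : (fun z => (f (Fin.cons z (lam ∘ t)) * g z) * ∏ j, Res (t j))
            = fun z => (∏ j, Res (t j)) *
                ((f (Fin.cons z (lam ∘ t)) * h z) / ∏ k, (z - lam k)) := by
          funext z
          rw [hg]
          ring
        rw [h2, circleIntegral.integral_const_mul]
        congr 1
        have hW : IsOpen (U ∩ V) := hU.inter hV
        have hWb : Metric.closedBall z₀ r ⊆ U ∩ V := Set.subset_inter hUb hVb
        have hH : DifferentiableOn ℂ (fun z => f (Fin.cons z (lam ∘ t)) * h z) (U ∩ V) := by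
          refine DifferentiableOn.mul ?_ (hh.mono Set.inter_subset_left)
          exact fun z hz => (hfz (lam ∘ t) hlamV z hz.2).differentiableWithinAt
        exact singleResidue z₀ r hr hM lam hinj hmem _ (U ∩ V) hW hWb hH
      rw [Finset.sum_congr rfl (fun t _ => step5 t)]
      -- Step 6: reindex
      have reindex : ∑ t' : Fin (n+1) → Fin M, f (lam ∘ t') * ∏ j, Res (t' j)
          = ∑ j : Fin M, ∑ t : Fin n → Fin M,
              f (Fin.cons (lam j) (lam ∘ t)) * (Res j * ∏ i, Res (t i)) := by
        rw [← Equiv.sum_comp (Fin.consEquiv fun _ => Fin M)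
          (fun t' => f (lam ∘ t') * ∏ j, Res (t' j)), Fintype.sum_prod_type]
        refine Finset.sum_congr rfl fun j _ => Finset.sum_congr rfl fun t _ => ?_
        have e1 : lam ∘ (Fin.consEquiv fun _ => Fin M) (j, t) = Fin.cons (lam j) (lam ∘ t) := by
          show lam ∘ Fin.cons j t = _
          rw [Fin.comp_cons]
        have e2 : ∏ i : Fin (n+1), Res (((Fin.consEquiv fun _ => Fin M) (j, t)) i)
            = Res j * ∏ i, Res (t i) := by
          show ∏ i : Fin (n+1), Res (Fin.cons (α := fun _ => Fin M) j t i) = _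
          rw [Fin.prod_univ_succ]
          simp [Fin.cons_zero, Fin.cons_succ]
        rw [e1, e2]
      rw [reindex]
      simp only [Finset.mul_sum, Finset.sum_mul]
      rw [Finset.sum_comm]
      refine Finset.sum_congr rfl fun j _ => Finset.sum_congr rfl fun t _ => ?_
      simp only [hRes]
      ring



/-- The residue-summation identity: a symmetric multiple contour integral of a function
vanishing on diagonals, integrated against `∏_j g(ω_j)` with
`g(z) = h(z)/∏_{j=1}^M (z−λ_j)`, equals a sum over `n`-element subsets of the simple
poles `λ₁,…,λ_M` of the corresponding residues. -/
theorem symmetric_multiple_integral_residue_sum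
    (z₀ : ℂ) (r : ℝ) (hr : 0 < r) (M n : ℕ) (hn1 : 1 ≤ n) (hnM : n ≤ M)
    (lam : Fin M → ℂ) (hinj : Function.Injective lam)
    (hmem : ∀ j, lam j ∈ Metric.ball z₀ r)
    (h : ℂ → ℂ) (U : Set ℂ) (hU : IsOpen U) (hUb : Metric.closedBall z₀ r ⊆ U)
    (hh : DifferentiableOn ℂ h U)
    (f : (Fin n → ℂ) → ℂ) (V : Set ℂ) (hV : IsOpen V)
    (hVb : Metric.closedBall z₀ r ⊆ V)
    (hf : ∀ (i : Fin n) (ω : Fin n → ℂ), (∀ j, ω j ∈ V) →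
      DifferentiableAt ℂ (fun z => f (Function.update ω i z)) (ω i))
    (hsym : ∀ (σ : Equiv.Perm (Fin n)) (ω : Fin n → ℂ), f (ω ∘ σ) = f ω)
    (hvan : ∀ (ω : Fin n → ℂ) (i j : Fin n), i ≠ j → ω i = ω j → f ω = 0) :
    (n.factorial : ℂ)⁻¹ * ((2 * Real.pi * Complex.I)⁻¹) ^ n *
        iterCircleIntegral z₀ r n
          (fun ω => f ω * ∏ j, (h (ω j) / ∏ k, (ω j - lam k)))
      = ∑ S ∈ (Finset.powersetCard n (Finset.univ : Finset (Fin M))).attach,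
          f (fun i => lam ((S.1.orderIsoOfFin
                ((Finset.mem_powersetCard.mp S.2).2) i : Fin M))) *
            ∏ j ∈ S.1,
              (h (lam j) / ∏ k ∈ Finset.univ.erase j, (lam j - lam k)) := by
  have hM : 0 < M := lt_of_lt_of_le hn1 hnM
  rw [lemA z₀ r hr hM lam hinj hmem h U hU hUb hh V hV hVb n f hf]
  set Res : Fin M → ℂ :=
    fun j => h (lam j) / ∏ k ∈ Finset.univ.erase j, (lam j - lam k) with hRes
  set G : (Fin n → Fin M) → ℂ := fun t => f (lam ∘ t) * ∏ j, Res (t j) with hG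
  have h2pi : (2 * (Real.pi : ℂ) * I) ≠ 0 := by
    simp [Real.pi_ne_zero, I_ne_zero, two_ne_zero]
  -- cancel the powers of 2πi
  rw [← mul_assoc, mul_assoc ((n.factorial : ℂ)⁻¹), ← mul_pow, inv_mul_cancel₀ h2pi,
    one_pow, mul_one]
  -- notation for the attach set
  set PS := (Finset.powersetCard n (Finset.univ : Finset (Fin M))).attach with hPS
  -- the canonical embedding for S
  have hcard : ∀ S : {x // x ∈ Finset.powersetCard n (Finset.univ : Finset (Fin M))},
      S.1.card = n := fun S => (Finset.mem_powersetCard.mp S.2).2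
  set e : {x // x ∈ Finset.powersetCard n (Finset.univ : Finset (Fin M))} → Fin n → Fin M :=
    fun S i => (S.1.orderIsoOfFin (hcard S) i : Fin M) with he
  have he_inj : ∀ S, Function.Injective (e S) := by
    intro S a b hab
    exact (Finset.orderIsoOfFin S.1 (hcard S)).injective (Subtype.ext hab)
  have he_image : ∀ S, Finset.image (e S) Finset.univ = S.1 := by
    intro S
    ext x
    simp only [Finset.mem_image, Finset.mem_univ, true_and]
    constructor
    · rintro ⟨i, rfl⟩; exact ((S.1.orderIsoOfFin (hcard S)) i).2
    · intro hx
      exact ⟨(S.1.orderIsoOfFin (hcard S)).symm ⟨x, hx⟩, by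
        simp only [he, OrderIso.apply_symm_apply]⟩
  -- the sum over all t equals the sum over injective t
  classical
  have hGvan : ∀ t : Fin n → Fin M, ¬ Function.Injective t → G t = 0 := by
    intro t ht
    rw [Function.not_injective_iff] at ht
    obtain ⟨i, j, hij, hne⟩ := ht
    have : f (lam ∘ t) = 0 := hvan (lam ∘ t) i j hne (by simp [Function.comp, hij])
    simp [hG, this]
  have step1 : ∑ t : Fin n → Fin M, G t
      = ∑ t ∈ Finset.univ.filter (fun t => Function.Injective t), G t :=
    (Finset.sum_filter_of_ne (fun t _ hGt => by
      by_contra hni; exact hGt (hGvan t hni))).symm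
  -- biject injective functions with pairs (S, σ)
  have step2 : ∑ p ∈ PS ×ˢ (Finset.univ : Finset (Equiv.Perm (Fin n))),
      G (e p.1 ∘ p.2)
      = ∑ t ∈ Finset.univ.filter (fun t => Function.Injective t), G t := by
    refine Finset.sum_bij (fun p _ => e p.1 ∘ p.2) ?_ ?_ ?_ ?_
    · intro p _
      simp only [Finset.mem_filter, Finset.mem_univ, true_and]
      exact (he_inj p.1).comp p.2.injective
    · rintro ⟨S1, σ1⟩ h1m ⟨S2, σ2⟩ h2m hp
      replace hp : e S1 ∘ ⇑σ1 = e S2 ∘ ⇑σ2 := hp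
      have him : ∀ (S) (σ : Equiv.Perm (Fin n)),
          Finset.image (e S ∘ ⇑σ) Finset.univ = S.1 := by
        intro S σ
        rw [← Finset.image_image, Finset.image_univ_equiv, he_image]
      have hS : S1 = S2 := by
        apply Subtype.ext
        rw [← him S1 σ1, ← him S2 σ2, hp]
      subst hS
      have hσ : σ1 = σ2 := by
        apply Equiv.ext
        intro i
        exact he_inj S1 (congrFun hp i)
      rw [hσ]
    · intro t ht
      rw [Finset.mem_filter] at ht
      have htinj : Function.Injective t := ht.2
      have hSmem : Finset.image t Finset.univ ∈
          Finset.powersetCard n (Finset.univ : Finset (Fin M)) := by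
        rw [Finset.mem_powersetCard]
        exact ⟨Finset.subset_univ _, by
          rw [Finset.card_image_of_injective _ htinj, Finset.card_univ, Fintype.card_fin]⟩
      set S : {x // x ∈ Finset.powersetCard n (Finset.univ : Finset (Fin M))} :=
        ⟨Finset.image t Finset.univ, hSmem⟩ with hSdef
      have hmem' : ∀ i, t i ∈ S.1 := fun i => Finset.mem_image_of_mem t (Finset.mem_univ i)
      set σ0 : Fin n → Fin n :=
        fun i => (S.1.orderIsoOfFin (hcard S)).symm ⟨t i, hmem' i⟩ with hσ0
      have hσ0inj : Function.Injective σ0 := by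
        intro a b hab
        apply htinj
        have := congrArg (S.1.orderIsoOfFin (hcard S)) hab
        simp only [hσ0, OrderIso.apply_symm_apply] at this
        exact congrArg Subtype.val this
      refine ⟨(S, Equiv.ofBijective σ0 (Finite.injective_iff_bijective.mp hσ0inj)),
        Finset.mem_product.mpr ⟨Finset.mem_attach _ _, Finset.mem_univ _⟩, ?_⟩
      funext i
      show e S (σ0 i) = t i
      simp only [he, hσ0, OrderIso.apply_symm_apply]
    · intro p _
      rfl
  rw [step1, ← step2, Finset.sum_product]
  -- each inner sum over permutations contributes n! equal terms
  have step3 : ∀ S, ∑ σ : Equiv.Perm (Fin n), G (e S ∘ σ) = (n.factorial : ℂ) * G (e S) := by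
    intro S
    have hterm : ∀ σ : Equiv.Perm (Fin n), G (e S ∘ σ) = G (e S) := by
      intro σ
      have h1 : f (lam ∘ (e S ∘ σ)) = f (lam ∘ e S) := by
        have : lam ∘ (e S ∘ σ) = (lam ∘ e S) ∘ σ := rfl
        rw [this, hsym σ (lam ∘ e S)]
      have h2 : ∏ j, Res ((e S ∘ σ) j) = ∏ j, Res (e S j) :=
        Equiv.prod_comp σ (fun j => Res (e S j))
      simp only [hG, h1, h2]
    rw [Finset.sum_congr rfl (fun σ _ => hterm σ), Finset.sum_const, Finset.card_univ,
      Fintype.card_perm, Fintype.card_fin, nsmul_eq_mul]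
  rw [Finset.sum_congr rfl (fun S _ => step3 S), Finset.mul_sum]
  have hfac : (n.factorial : ℂ) ≠ 0 := Nat.cast_ne_zero.mpr n.factorial_ne_zero
  refine Finset.sum_congr rfl fun S _ => ?_
  rw [← mul_assoc, inv_mul_cancel₀ hfac, one_mul]
  -- finally identify G (e S) with the stated residue term
  have hprod : ∏ j, Res (e S j) = ∏ j ∈ S.1, Res j := by
    rw [← he_image S, Finset.prod_image (fun a _ b _ hab => he_inj S hab)]
  simp only [hG, hprod]
  rfl
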